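/- Let f ∈ R[x] be a monic basic irreducible polynomial of degree d, and let g ∈ R[x] be coprime to f in R[x] with deg g < d·p^s. Set K = R[x]/⟨f^{p^s} + γg⟩. Then K is a finite commutative chain ring: its ideals are exactly ⟨f^ν⟩ for 0 ≤ ν ≤ 2p^s, these form a strictly decreasing chain K = ⟨f^0⟩ ⊋ ⟨f⟩ ⊋ ⟨f²⟩ ⊋ ⋯ ⊋ ⟨f^{2p^s−1}⟩ ⊋ ⟨f^{2p^s}⟩ = {0}, and for each 0 ≤ ν ≤ 2p^s the ideal ⟨f^ν⟩ has exactly p^{md(2p^s − ν)} elements. -/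

import Mathlib

open Polynomial


lemma units_of_span_max {A : Type*} [CommRing A] (t : A) (N : ℕ) (htN : t ^ N = 0)
    (hmaxt : (Ideal.span {t}).IsMaximal) : ∀ u : A, u ∉ Ideal.span {t} → IsUnit u := by
  intro u hu
  by_contra hnu
  obtain ⟨M, hM, hle⟩ := Ideal.exists_le_maximal (Ideal.span {u})
    (fun h => hnu (Ideal.span_singleton_eq_top.mp h))
  have htM : t ∈ M := hM.isPrime.mem_of_pow_mem N (htN ▸ M.zero_mem)
  have : Ideal.span {t} = M := hmaxt.eq_of_le hM.ne_top
    ((Ideal.span_singleton_le_iff_mem M).mpr htM)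
  exact hu (this ▸ hle (Ideal.subset_span rfl))

lemma chain_ideals {A : Type*} [CommRing A] (t : A) (N : ℕ)
    (hu : ∀ u : A, u ∉ Ideal.span {t} → IsUnit u) (htN : t ^ N = 0)
    (I : Ideal A) : ∃ ν ≤ N, I = Ideal.span {t ^ ν} := by
  classical
  by_cases hbot : I = ⊥
  · exact ⟨N, le_rfl, by rw [hbot, htN, Ideal.span_singleton_eq_bot.mpr rfl]⟩
  · have h0 : I ≤ Ideal.span {t ^ 0} := by
      rw [pow_zero, Ideal.span_singleton_one]; exact le_top
    set Pp : ℕ → Prop := fun k => I ≤ Ideal.span {t ^ k} with hPp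
    let k := Nat.findGreatest Pp N
    have hkN : k ≤ N := Nat.findGreatest_le N
    have hk : Pp k := Nat.findGreatest_spec (Nat.zero_le N) h0
    have hk1 : ¬ Pp (k + 1) := by
      rcases Nat.lt_or_ge N (k + 1) with h | h
      · intro hcon
        have hkN' : k = N := le_antisymm hkN (by omega)
        have : I ≤ ⊥ := by
          refine le_trans hcon ?_
          rw [hkN', pow_succ, htN, zero_mul, Ideal.span_singleton_eq_bot.mpr rfl]
        exact hbot (le_bot_iff.mp this)
      · exact Nat.findGreatest_is_greatest (Nat.lt_succ_self k) h
    refine ⟨k, hkN, le_antisymm hk ?_⟩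
    obtain ⟨x, hxI, hxk1⟩ := SetLike.not_le_iff_exists.mp hk1
    obtain ⟨v, hv⟩ := Ideal.mem_span_singleton'.mp (hk hxI)
    have hvu : v ∉ Ideal.span {t} := by
      intro hvmem
      obtain ⟨w, hw⟩ := Ideal.mem_span_singleton'.mp hvmem
      exact hxk1 (Ideal.mem_span_singleton'.mpr ⟨w, by rw [← hv, ← hw, pow_succ]; ring⟩)
    obtain ⟨u, huv⟩ := hu v hvu
    have htk : t ^ k ∈ I := by
      have : (↑u⁻¹ : A) * x = t ^ k := by
        rw [← hv, ← huv, ← mul_assoc, Units.inv_mul, one_mul]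
      exact this ▸ I.mul_mem_left _ hxI
    exact (Ideal.span_singleton_le_iff_mem I).mpr htk


lemma card_quot_mul {R M : Type*} [Ring R] [AddCommGroup M] [Module R M] (N : Submodule R M) :
    Nat.card M = Nat.card (M ⧸ N) * Nat.card N :=
  AddSubgroup.card_eq_card_quotient_mul_card_addSubgroup N.toAddSubgroup

lemma finite_quot {R M : Type*} [Ring R] [AddCommGroup M] [Module R M] [Finite M]
    (N : Submodule R M) : Finite (M ⧸ N) :=
  Finite.of_surjective _ (Submodule.mkQ_surjective N)

lemma card_span_pow {A : Type*} [CommRing A] [Finite A] (t : A) (N P : ℕ)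
    (htN : t ^ N = 0)
    (hcardA : Nat.card A = P ^ N)
    (hres : Nat.card (A ⧸ Ideal.span {t}) = P) :
    ∀ ν ≤ N, Nat.card (Ideal.span {t ^ ν} : Ideal A) = P ^ (N - ν) := by
  set S : ℕ → Ideal A := fun ν => Ideal.span {t ^ ν} with hS
  have hle : ∀ ν, S (ν + 1) ≤ S ν := fun ν =>
    Ideal.span_singleton_le_span_singleton.mpr (pow_dvd_pow t (Nat.le_succ ν))
  set q : ℕ → ℕ := fun ν =>
    Nat.card (↥(S ν) ⧸ (Submodule.comap (S ν).subtype (S (ν + 1)))) with hq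
  have step : ∀ ν, Nat.card ↥(S ν) = q ν * Nat.card ↥(S (ν + 1)) := by
    intro ν
    haveI := finite_quot (Submodule.comap (S ν).subtype (S (ν + 1)))
    rw [card_quot_mul (Submodule.comap (S ν).subtype (S (ν + 1)))]
    congr 1
    exact Nat.card_congr (Submodule.comapSubtypeEquivOfLe (hle ν)).toEquiv
  have qpos : ∀ ν, 0 < q ν := fun ν =>
    haveI := finite_quot (Submodule.comap (S ν).subtype (S (ν + 1)))
    haveI : Nonempty (↥(S ν) ⧸ (Submodule.comap (S ν).subtype (S (ν + 1)))) := ⟨0⟩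
    Nat.card_pos
  have qbound : ∀ ν, q ν ≤ P := by
    intro ν
    have hmem : t ^ ν ∈ S ν := Ideal.subset_span rfl
    set φ : A →ₗ[A] ↥(S ν) :=
      LinearMap.codRestrict (S ν) (LinearMap.toSpanSingleton A A (t ^ ν))
        (fun x => Submodule.smul_mem _ x hmem) with hφ
    have hφsurj : Function.Surjective φ := by
      rintro ⟨y, hy⟩
      obtain ⟨a, ha⟩ := Ideal.mem_span_singleton'.mp hy
      refine ⟨a, Subtype.ext ?_⟩
      simp only [hφ, LinearMap.codRestrict_apply, LinearMap.toSpanSingleton_apply,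
        smul_eq_mul]
      exact ha
    set ψ := (Submodule.comap (S ν).subtype (S (ν + 1))).mkQ.comp φ with hψ
    have hψsurj : Function.Surjective ψ :=
      (Submodule.mkQ_surjective _).comp hφsurj
    have hker : (Ideal.span {t} : Ideal A) ≤ LinearMap.ker ψ := by
      intro x hx
      obtain ⟨a, ha⟩ := Ideal.mem_span_singleton'.mp hx
      rw [LinearMap.mem_ker, hψ, LinearMap.comp_apply, Submodule.mkQ_apply,
        Submodule.Quotient.mk_eq_zero]
      show (φ x : A) ∈ S (ν + 1)
      have hval : (φ x : A) = a * t ^ (ν + 1) := by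
        simp only [hφ, LinearMap.codRestrict_apply, LinearMap.toSpanSingleton_apply,
          smul_eq_mul, ← ha, pow_succ]
        show a * t * t ^ ν = a * (t ^ ν * t)
        ring
      rw [hval]
      exact Ideal.mem_span_singleton'.mpr ⟨a, rfl⟩
    have hψ'surj : Function.Surjective (Submodule.liftQ (Ideal.span {t} : Ideal A) ψ hker) := by
      intro y
      obtain ⟨x, hx⟩ := hψsurj y
      exact ⟨Submodule.Quotient.mk x, by rw [Submodule.liftQ_apply]; exact hx⟩
    haveI := finite_quot (Ideal.span {t} : Ideal A)
    calc q ν ≤ Nat.card (A ⧸ (Ideal.span {t} : Ideal A)) :=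
          Nat.card_le_card_of_surjective _ hψ'surj
      _ = P := hres
  have hIco : ∀ k j, j + k = N → Nat.card ↥(S j) = ∏ i ∈ Finset.Ico j N, q i := by
    intro k
    induction k with
    | zero =>
      intro j hj
      have hj' : j = N := by omega
      rw [hj']
      have hbot : S N = ⊥ := by
        rw [hS]; simp only [htN]; exact Ideal.span_singleton_eq_bot.mpr rfl
      rw [hbot, Finset.Ico_self, Finset.prod_empty]
      exact Nat.card_unique
    | succ k ih =>
      intro j hj
      have hjN : j < N := by omega
      rw [step j, ih (j + 1) (by omega), Finset.prod_eq_prod_Ico_succ_bot hjN q]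
  have hprod : ∏ i ∈ Finset.range N, q i = P ^ N := by
    have htop : S 0 = ⊤ := by rw [hS]; simp [Ideal.span_singleton_one]
    have h0 : Nat.card ↥(S 0) = P ^ N := by
      rw [htop, Nat.card_congr Submodule.topEquiv.toEquiv, hcardA]
    rw [Finset.range_eq_Ico, ← hIco N 0 (by omega), h0]
  have qeq : ∀ i ∈ Finset.range N, q i = P := by
    by_contra hcon
    push_neg at hcon
    obtain ⟨i, hi, hne⟩ := hcon
    have hlt : ∏ j ∈ Finset.range N, q j < ∏ _j ∈ Finset.range N, P :=
      Finset.prod_lt_prod (fun j _ => qpos j) (fun j _ => qbound j)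
        ⟨i, hi, lt_of_le_of_ne (qbound i) hne⟩
    rw [hprod, Finset.prod_const, Finset.card_range] at hlt
    exact lt_irrefl _ hlt
  intro ν hν
  show Nat.card ↥(S ν) = P ^ (N - ν)
  rw [hIco (N - ν) ν (by omega)]
  calc ∏ i ∈ Finset.Ico ν N, q i = ∏ _i ∈ Finset.Ico ν N, P :=
        Finset.prod_congr rfl
          (fun i hi => qeq i (Finset.mem_range.mpr (Finset.mem_Ico.mp hi).2))
    _ = P ^ (N - ν) := by rw [Finset.prod_const, Nat.card_Ico]

noncomputable def quotSpanEquivFun {A : Type*} [CommRing A] {q : A[X]} (h : q.Monic) :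
    (A[X] ⧸ Ideal.span {q}) ≃ (Fin q.natDegree → A) :=
  ((AdjoinRoot.powerBasis' h).basis.equivFun).toEquiv

lemma card_quot_span_monic {A : Type*} [CommRing A] [Finite A] {q : A[X]} (h : q.Monic) :
    Nat.card (A[X] ⧸ Ideal.span {q}) = Nat.card A ^ q.natDegree := by
  rw [Nat.card_congr (quotSpanEquivFun h), Nat.card_fun]
  simp

/-- `K = R[x]/⟨f^{p^s} + γ g⟩` is a finite commutative chain ring whose
ideals are exactly the `⟨f^ν⟩` for `0 ≤ ν ≤ 2p^s`, forming a strictly decreasing chain,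
and `⟨f^ν⟩` has exactly `p^{md(2p^s − ν)}` elements. -/
theorem stmt3 {R : Type} [CommRing R] [Finite R]
    (p m s n : ℕ) (hp : p.Prime) (hm : 0 < m) (hs : 0 < s) (hn : 0 < n)
    (hnp : Nat.gcd n p = 1)
    (γ : R) (hγ : γ ≠ 0) (hγ2 : γ ^ 2 = 0)
    (hmax : ∀ a : R, a ∈ Ideal.span {γ} ↔ ¬ IsUnit a)
    (hres : Nat.card (R ⧸ Ideal.span {γ}) = p ^ m)
    (d : ℕ) (f g : R[X]) (hf : f.Monic) (hd : f.natDegree = d)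
    (hfi : Irreducible (f.map (Ideal.Quotient.mk (Ideal.span {γ}))))
    (hfg : IsCoprime f g) (hdeg : g.degree < ((d * p ^ s : ℕ) : WithBot ℕ)) :
    (∀ I J : Ideal (R[X] ⧸ Ideal.span {f ^ p ^ s + C γ * g}), I ≤ J ∨ J ≤ I) ∧
    (∀ I : Ideal (R[X] ⧸ Ideal.span {f ^ p ^ s + C γ * g}),
      ∃ ν ≤ 2 * p ^ s,
        I = Ideal.span {Ideal.Quotient.mk (Ideal.span {f ^ p ^ s + C γ * g}) (f ^ ν)}) ∧
    (∀ ν < 2 * p ^ s,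
      Ideal.span {Ideal.Quotient.mk (Ideal.span {f ^ p ^ s + C γ * g}) (f ^ (ν + 1))} <
        Ideal.span {Ideal.Quotient.mk (Ideal.span {f ^ p ^ s + C γ * g}) (f ^ ν)}) ∧
    Ideal.span {Ideal.Quotient.mk (Ideal.span {f ^ p ^ s + C γ * g}) (f ^ (2 * p ^ s))} =
      (⊥ : Ideal (R[X] ⧸ Ideal.span {f ^ p ^ s + C γ * g})) ∧
    Ideal.span {Ideal.Quotient.mk (Ideal.span {f ^ p ^ s + C γ * g}) (f ^ 0)} =
      (⊤ : Ideal (R[X] ⧸ Ideal.span {f ^ p ^ s + C γ * g})) ∧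
    (∀ ν ≤ 2 * p ^ s,
      Nat.card
          ↥(Ideal.span {Ideal.Quotient.mk (Ideal.span {f ^ p ^ s + C γ * g}) (f ^ ν)}) =
        p ^ (m * d * (2 * p ^ s - ν))) := by
  have hR : Nontrivial R := nontrivial_of_ne γ 0 hγ
  have hImax : (Ideal.span {γ} : Ideal R).IsMaximal := by
    rw [Ideal.isMaximal_iff]
    constructor
    · intro h1; exact (hmax 1).mp h1 isUnit_one
    · intro J x hle hx hxJ
      have hux : IsUnit x := not_not.mp (fun h => hx ((hmax x).mpr h))
      obtain ⟨u, rfl⟩ := hux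
      have : (1 : R) = ↑u⁻¹ * ↑u := (Units.inv_mul u).symm
      rw [this]
      exact J.mul_mem_left _ hxJ
  haveI := hImax
  letI : Field (R ⧸ Ideal.span {γ}) := Ideal.Quotient.field _
  have hfbarm : (f.map (Ideal.Quotient.mk (Ideal.span {γ}))).Monic := hf.map _
  have hfbardeg : (f.map (Ideal.Quotient.mk (Ideal.span {γ}))).natDegree = d := by
    rw [hf.natDegree_map]; exact hd
  have hdpos : 0 < d := hfbardeg ▸ hfi.natDegree_pos
  set D := d * p ^ s with hD
  have hDpos : 0 < D := Nat.mul_pos hdpos (pow_pos hp.pos s)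
  set F := f ^ p ^ s + C γ * g with hFdef
  have hdegfp : (f ^ p ^ s).degree = (D : WithBot ℕ) := by
    rw [Polynomial.degree_eq_natDegree (hf.pow (p ^ s)).ne_zero, hf.natDegree_pow, hd, hD,
      mul_comm]
  have hdegCg : (C γ * g).degree < (f ^ p ^ s).degree := by
    have h1 : (C γ * g).degree ≤ g.degree := by
      refine le_trans (degree_mul_le _ _) ?_
      calc (C γ).degree + g.degree ≤ 0 + g.degree := add_le_add degree_C_le le_rfl
        _ = g.degree := zero_add _
    exact lt_of_le_of_lt h1 (by rw [hdegfp]; exact hdeg)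
  have hFm : F.Monic := (hf.pow _).add_of_left hdegCg
  have hFdeg : F.natDegree = D := by
    apply Polynomial.natDegree_eq_of_degree_eq_some
    rw [hFdef, degree_add_eq_left_of_degree_lt hdegCg, hdegfp]
  set N := 2 * p ^ s with hN
  set mkF := Ideal.Quotient.mk (Ideal.span {F}) with hmkF
  set t := mkF f with ht
  have htN : t ^ N = 0 := by
    rw [ht, ← map_pow, Ideal.Quotient.eq_zero_iff_mem]
    have hC2 : (C γ : R[X]) ^ 2 = 0 := by rw [← map_pow, hγ2, map_zero]
    have hkey : f ^ N = F * (F - 2 * (C γ * g)) := by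
      have h2 : f ^ N = (f ^ p ^ s) ^ 2 := by rw [hN, pow_mul']
      rw [h2, hFdef]
      linear_combination g ^ 2 * hC2
    rw [hkey]
    exact Ideal.mem_span_singleton'.mpr ⟨F - 2 * (C γ * g), by ring⟩
  haveI hKfin : Finite (R[X] ⧸ Ideal.span {F}) := Finite.of_equiv _ (quotSpanEquivFun hFm).symm
  -- cardinality of R
  have hker : LinearMap.ker (LinearMap.toSpanSingleton R R γ) = (Ideal.span {γ} : Ideal R) := by
    ext x
    rw [LinearMap.mem_ker, LinearMap.toSpanSingleton_apply, smul_eq_mul]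
    constructor
    · intro hx0
      refine (hmax x).mpr ?_
      rintro ⟨u, rfl⟩
      apply hγ
      calc γ = ↑u⁻¹ * (↑u * γ) := by rw [← mul_assoc, Units.inv_mul, one_mul]
        _ = 0 := by rw [hx0, mul_zero]
    · intro hx
      obtain ⟨a, rfl⟩ := Ideal.mem_span_singleton'.mp hx
      rw [mul_assoc, ← sq, hγ2, mul_zero]
  have hrange : LinearMap.range (LinearMap.toSpanSingleton R R γ) = (Ideal.span {γ} : Ideal R) := by
    rw [← LinearMap.span_singleton_eq_range]
  have cardspanγ : Nat.card ↥(Ideal.span {γ} : Ideal R) = p ^ m := by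
    rw [← hres]
    have e := LinearMap.quotKerEquivRange (LinearMap.toSpanSingleton R R γ)
    rw [hker, hrange] at e
    exact (Nat.card_congr e.toEquiv).symm
  have cardR : Nat.card R = p ^ (2 * m) := by
    rw [card_quot_mul (Ideal.span {γ} : Ideal R), hres, cardspanγ, ← pow_add]
    congr 1
    omega
  set P := p ^ (m * d) with hP
  have cardK : Nat.card (R[X] ⧸ Ideal.span {F}) = P ^ N := by
    rw [card_quot_span_monic hFm, hFdeg, cardR, hP, ← pow_mul, ← pow_mul]
    congr 1
    rw [hD, hN]
    ring
  -- residue field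
  have hspan_t : (Ideal.span {t} : Ideal (R[X] ⧸ Ideal.span {F}))
      = Ideal.map mkF (Ideal.span {f}) := by
    rw [Ideal.map_span, Set.image_singleton]
  obtain ⟨a, b, hab⟩ := hfg
  have hfp : f ^ (p ^ s - 1) * f = f ^ p ^ s := by
    rw [← pow_succ]
    congr 1
    have : 0 < p ^ s := pow_pos hp.pos s
    omega
  have hkeyγ : (C γ : R[X]) = b * F + (C γ * a - b * f ^ (p ^ s - 1)) * f := by
    rw [hFdef]
    linear_combination (-(C γ)) * hab + b * hfp
  have hmapC : Ideal.map C (Ideal.span {γ} : Ideal R) = Ideal.span {(C γ : R[X])} := by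
    rw [Ideal.map_span, Set.image_singleton]
  have hsup : Ideal.span {F} ⊔ Ideal.span {f}
      = Ideal.map C (Ideal.span {γ} : Ideal R) ⊔ Ideal.span {f} := by
    apply le_antisymm
    · refine sup_le ?_ le_sup_right
      have h1 : f ^ p ^ s ∈ (Ideal.span {f} : Ideal R[X]) :=
        Ideal.mem_span_singleton'.mpr ⟨f ^ (p ^ s - 1), hfp⟩
      have h2 : C γ * g ∈ Ideal.map C (Ideal.span {γ} : Ideal R) := by
        rw [hmapC]
        exact Ideal.mem_span_singleton'.mpr ⟨g, mul_comm g (C γ)⟩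
      refine (Ideal.span_singleton_le_iff_mem _).mpr ?_
      rw [hFdef]
      exact Submodule.add_mem _ (Ideal.mem_sup_right h1) (Ideal.mem_sup_left h2)
    · refine sup_le ?_ le_sup_right
      rw [hmapC]
      refine (Ideal.span_singleton_le_iff_mem _).mpr ?_
      rw [hkeyγ]
      exact Submodule.add_mem _
        (Ideal.mem_sup_left (Ideal.mem_span_singleton'.mpr ⟨b, rfl⟩))
        (Ideal.mem_sup_right (Ideal.mem_span_singleton'.mpr ⟨_, rfl⟩))
  have hIJ : Ideal.map (Ideal.Quotient.mk (Ideal.map C (Ideal.span {γ} : Ideal R)))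
        (Ideal.span {f})
      = Ideal.map (Ideal.polynomialQuotientEquivQuotientPolynomial (Ideal.span {γ}) :
          (R ⧸ Ideal.span {γ})[X] →+* R[X] ⧸ Ideal.map C (Ideal.span {γ} : Ideal R))
        (Ideal.span {f.map (Ideal.Quotient.mk (Ideal.span {γ}))}) := by
    simp only [Ideal.map_span, Set.image_singleton, RingEquiv.coe_toRingHom,
      Ideal.polynomialQuotientEquivQuotientPolynomial_map_mk]
  let e : ((R[X] ⧸ Ideal.span {F}) ⧸ (Ideal.span {t} : Ideal (R[X] ⧸ Ideal.span {F})))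
      ≃+* (R ⧸ Ideal.span {γ})[X] ⧸ Ideal.span {f.map (Ideal.Quotient.mk (Ideal.span {γ}))} :=
    (Ideal.quotEquivOfEq hspan_t).trans <|
      (DoubleQuot.quotQuotEquivQuotSup (Ideal.span {F}) (Ideal.span {f})).trans <|
        (Ideal.quotEquivOfEq hsup).trans <|
          (DoubleQuot.quotQuotEquivQuotSup (Ideal.map C (Ideal.span {γ} : Ideal R))
                (Ideal.span {f})).symm.trans
            (Ideal.quotientEquiv _ _
                (Ideal.polynomialQuotientEquivQuotientPolynomial (Ideal.span {γ})) hIJ).symm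
  haveI : Finite (R ⧸ Ideal.span {γ}) := finite_quot _
  have cardRes :
      Nat.card ((R[X] ⧸ Ideal.span {F}) ⧸ (Ideal.span {t} : Ideal (R[X] ⧸ Ideal.span {F})))
        = P := by
    rw [Nat.card_congr e.toEquiv, card_quot_span_monic hfbarm, hfbardeg, hres, hP, ← pow_mul]
  haveI hmaxf : (Ideal.span {f.map (Ideal.Quotient.mk (Ideal.span {γ}))}).IsMaximal :=
    PrincipalIdealRing.isMaximal_of_irreducible hfi
  letI : Field ((R ⧸ Ideal.span {γ})[X] ⧸
      Ideal.span {f.map (Ideal.Quotient.mk (Ideal.span {γ}))}) := Ideal.Quotient.field _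
  have hKt_max : (Ideal.span {t} : Ideal (R[X] ⧸ Ideal.span {F})).IsMaximal :=
    Ideal.Quotient.maximal_of_isField _ (MulEquiv.isField (Field.toIsField _) e.toMulEquiv)
  have hu := units_of_span_max t N htN hKt_max
  have hchain := chain_ideals t N hu htN
  have hcards := card_span_pow t N P htN cardK cardRes
  have hmkpow : ∀ ν : ℕ, mkF (f ^ ν) = t ^ ν := fun ν => map_pow mkF f ν
  have hP1 : 1 < P := Nat.one_lt_pow (Nat.mul_pos hm hdpos).ne' hp.one_lt
  refine ⟨?_, ?_, ?_, ?_, ?_, ?_⟩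
  · intro I J
    obtain ⟨ν, _, hI⟩ := hchain I
    obtain ⟨μ, _, hJ⟩ := hchain J
    rcases le_total μ ν with h | h
    · left
      rw [hI, hJ]
      exact Ideal.span_singleton_le_span_singleton.mpr (pow_dvd_pow t h)
    · right
      rw [hI, hJ]
      exact Ideal.span_singleton_le_span_singleton.mpr (pow_dvd_pow t h)
  · intro I
    obtain ⟨ν, hν, hI⟩ := hchain I
    exact ⟨ν, hν, by rw [hmkpow ν]; exact hI⟩
  · intro ν hν
    rw [hmkpow, hmkpow]
    refine lt_of_le_of_ne
      (Ideal.span_singleton_le_span_singleton.mpr (pow_dvd_pow t (Nat.le_succ ν))) ?_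
    intro heq
    have h1 := hcards (ν + 1) (by omega)
    have h2 := hcards ν (by omega)
    rw [← heq] at h2
    have hPeq := h1.symm.trans h2
    have hexp := Nat.pow_right_injective hP1 hPeq
    omega
  · rw [hmkpow, htN]
    exact Ideal.span_singleton_eq_bot.mpr rfl
  · rw [pow_zero, map_one, Ideal.span_singleton_one]
  · intro ν hν
    rw [hmkpow, hcards ν hν, hP, ← pow_mul]
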